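/- Let f : ℝⁿ → ℝ be L-smooth. For AggHB iterates with A = (1/m)∑ᵢ βᵢγᵢ/(1-βᵢ), the one-step descent on the virtual iterates satisfies f(x̃_{k+1}) ≤ f(x̃_k) - (A/2)(1 - LA)‖∇f(x_k)‖² + (AL²/(2m²))‖∑ᵢ (βᵢγᵢ/(1-βᵢ))V_{k-1}^{(i)}‖². -/

import Mathlib

open RealInnerProductSpace
lemma descent_lemma {E : Type*} [NormedAddCommGroup E] [InnerProductSpace ℝ E]
    [CompleteSpace E]
    (f : E → ℝ) (hf : Differentiable ℝ f) (L : ℝ) (hL : 0 ≤ L)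
    (hsmooth : ∀ x y, ‖gradient f x - gradient f y‖ ≤ L * ‖x - y‖) (x y : E) :
    f y ≤ f x + ⟪gradient f x, y - x⟫ + L / 2 * ‖y - x‖ ^ 2 := by
  have hgc : Continuous (fun z => gradient f z) := by
    rw [Metric.continuous_iff]
    intro z ε hε
    rcases eq_or_lt_of_le hL with h0 | h0
    · exact ⟨1, one_pos, fun a _ => by
        have := hsmooth a z
        rw [← h0, zero_mul] at this
        simpa [dist_eq_norm] using lt_of_le_of_lt this hε⟩
    · refine ⟨ε / L, by positivity, fun a ha => ?_⟩
      have := hsmooth a z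
      rw [dist_eq_norm] at ha ⊢
      calc ‖gradient f a - gradient f z‖ ≤ L * ‖a - z‖ := this
        _ < L * (ε / L) := by exact mul_lt_mul_of_pos_left ha h0
        _ = ε := by field_simp
  have hline : ∀ t : ℝ, HasDerivAt (fun t : ℝ => x + t • (y - x)) (y - x) t := by
    intro t
    simpa using ((hasDerivAt_id t).smul_const (y - x)).const_add x
  have hφ : ∀ t : ℝ, HasDerivAt (fun t : ℝ => f (x + t • (y - x)))
      (⟪gradient f (x + t • (y - x)), y - x⟫) t := by
    intro t
    have h1 : HasFDerivAt f (fderiv ℝ f (x + t • (y - x))) (x + t • (y - x)) :=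
      (hf _).hasFDerivAt
    have := h1.comp_hasDerivAt t (hline t)
    rw [inner_gradient_left]; exact this
  have hcont : Continuous (fun t : ℝ => ⟪gradient f (x + t • (y - x)), y - x⟫) := by
    apply Continuous.inner
    · exact hgc.comp (continuous_const.add (continuous_id.smul continuous_const))
    · exact continuous_const
  have hftc : ∫ t in (0:ℝ)..1, ⟪gradient f (x + t • (y - x)), y - x⟫ = f y - f x := by
    have := intervalIntegral.integral_eq_sub_of_hasDerivAt
      (fun t _ => hφ t) (hcont.intervalIntegrable 0 1)
    simpa using this
  have hbound : ∀ t ∈ Set.Icc (0:ℝ) 1,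
      ⟪gradient f (x + t • (y - x)), y - x⟫ ≤
        ⟪gradient f x, y - x⟫ + L * t * ‖y - x‖ ^ 2 := by
    intro t ht
    have h1 : ⟪gradient f (x + t • (y - x)) - gradient f x, y - x⟫ ≤
        ‖gradient f (x + t • (y - x)) - gradient f x‖ * ‖y - x‖ :=
      real_inner_le_norm _ _
    have h2 : ‖gradient f (x + t • (y - x)) - gradient f x‖ ≤ L * (t * ‖y - x‖) := by
      have := hsmooth (x + t • (y - x)) x
      simpa [norm_smul, abs_of_nonneg ht.1] using this
    have h3 : ⟪gradient f (x + t • (y - x)) - gradient f x, y - x⟫ ≤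
        L * t * ‖y - x‖ ^ 2 := by
      calc _ ≤ ‖gradient f (x + t • (y - x)) - gradient f x‖ * ‖y - x‖ := h1
        _ ≤ L * (t * ‖y - x‖) * ‖y - x‖ :=
            mul_le_mul_of_nonneg_right h2 (norm_nonneg _)
        _ = L * t * ‖y - x‖ ^ 2 := by ring
    have := inner_sub_left (𝕜 := ℝ) (gradient f (x + t • (y - x))) (gradient f x) (y - x)
    linarith [h3, this.symm.le, this.le]
  have hint : ∫ t in (0:ℝ)..1, ⟪gradient f (x + t • (y - x)), y - x⟫ ≤
      ∫ t in (0:ℝ)..1, (⟪gradient f x, y - x⟫ + L * t * ‖y - x‖ ^ 2) := by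
    apply intervalIntegral.integral_mono_on zero_le_one
      (hcont.intervalIntegrable 0 1)
    · exact ((by continuity : Continuous fun t : ℝ =>
        ⟪gradient f x, y - x⟫ + L * t * ‖y - x‖ ^ 2).intervalIntegrable 0 1)
    · exact hbound
  have hval : ∫ t in (0:ℝ)..1, (⟪gradient f x, y - x⟫ + L * t * ‖y - x‖ ^ 2) =
      ⟪gradient f x, y - x⟫ + L / 2 * ‖y - x‖ ^ 2 := by
    rw [intervalIntegral.integral_add (intervalIntegrable_const)
      ((by continuity : Continuous fun t : ℝ =>
        L * t * ‖y - x‖ ^ 2).intervalIntegrable 0 1)]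
    simp only [intervalIntegral.integral_const, smul_eq_mul]
    have : ∫ t in (0:ℝ)..1, L * t * ‖y - x‖ ^ 2 = L / 2 * ‖y - x‖ ^ 2 := by
      have : (fun t : ℝ => L * t * ‖y - x‖ ^ 2) = fun t : ℝ => (L * ‖y - x‖ ^ 2) * t := by
        ext t; ring
      rw [this, intervalIntegral.integral_const_mul, integral_id]
      ring
    rw [this]; ring
  linarith [hftc ▸ hint, hval ▸ hint]


/-- One-step descent on the AggHB virtual iterates in the non-convex analysis:
with `A = (1/m)∑ᵢ βᵢγᵢ/(1-βᵢ)` and `x̃_{k+1} = x̃_k - A∇f(x_k)`,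
`f(x̃_{k+1}) ≤ f(x̃_k) - (A/2)(1 - LA)‖∇f(x_k)‖²
  + (AL²/(2m²))‖∑ᵢ (βᵢγᵢ/(1-βᵢ))V_{k-1}^{(i)}‖²`. -/
theorem AggHB_virtual_descent {n : ℕ}
    (f : EuclideanSpace ℝ (Fin n) → ℝ) (hf : Differentiable ℝ f)
    (L : ℝ) (hL : 0 ≤ L)
    (hsmooth : ∀ x y, ‖gradient f x - gradient f y‖ ≤ L * ‖x - y‖)
    (m : ℕ) (β γ : Fin (m + 1) → ℝ)
    (hβ : ∀ i, β i ∈ Set.Ico (0 : ℝ) 1) (hγ : ∀ i, 0 < γ i)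
    (A : ℝ) (hA : A = (1 / (m + 1 : ℝ)) * ∑ i, β i * γ i / (1 - β i))
    (xtk xtk1 xk : EuclideanSpace ℝ (Fin n)) (Vprev : Fin (m + 1) → EuclideanSpace ℝ (Fin n))
    (hrec : xtk1 = xtk - A • gradient f xk)
    (hdev : xtk - xk = -((1 / (m + 1 : ℝ)) • ∑ i, (β i * γ i / (1 - β i)) • Vprev i)) :
    f xtk1 ≤ f xtk - A / 2 * (1 - L * A) * ‖gradient f xk‖ ^ 2 +
      A * L ^ 2 / (2 * (m + 1 : ℝ) ^ 2) *
        ‖∑ i, (β i * γ i / (1 - β i)) • Vprev i‖ ^ 2 := by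
  set g := gradient f xk with hg
  set gt := gradient f xtk with hgt
  set S := ∑ i, (β i * γ i / (1 - β i)) • Vprev i with hS
  have hA0 : 0 ≤ A := by
    rw [hA]
    apply mul_nonneg (by positivity)
    apply Finset.sum_nonneg
    intro i _
    have h1 := (hβ i).1; have h2 := (hβ i).2; have h3 := (hγ i).le
    have h4 : 0 < 1 - β i := by linarith
    positivity
  have hc : (0:ℝ) < (m + 1 : ℝ) := by positivity
  have hd := descent_lemma f hf L hL hsmooth xtk xtk1
  have hd1 : xtk1 - xtk = -(A • g) := by rw [hrec]; abel
  have hinner : ⟪gt, xtk1 - xtk⟫ = -(A * ⟪gt, g⟫) := by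
    rw [hd1, inner_neg_right, real_inner_smul_right]
  have hnorm : ‖xtk1 - xtk‖ ^ 2 = A ^ 2 * ‖g‖ ^ 2 := by
    rw [hd1, norm_neg, norm_smul, Real.norm_eq_abs, mul_pow, sq_abs]
  rw [hinner, hnorm] at hd
  have hIP : ‖gt - g‖ ^ 2 = ‖gt‖ ^ 2 - 2 * ⟪gt, g⟫ + ‖g‖ ^ 2 := by
    rw [norm_sub_sq_real]
  have hDS : ‖S‖ = (m + 1 : ℝ) * ‖xtk - xk‖ := by
    rw [hdev, norm_neg, norm_smul, Real.norm_eq_abs,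
      abs_of_pos (by positivity : (0:ℝ) < 1 / (m + 1 : ℝ))]
    field_simp
  have hkey : A * L ^ 2 / (2 * (m + 1 : ℝ) ^ 2) * ‖S‖ ^ 2 =
      A * L ^ 2 / 2 * ‖xtk - xk‖ ^ 2 := by
    rw [hDS, mul_pow]; field_simp
  rw [hkey]
  have hlip : ‖gt - g‖ ≤ L * ‖xtk - xk‖ := hsmooth xtk xk
  nlinarith [mul_nonneg hA0 (sq_nonneg ‖gt‖),
    mul_nonneg hA0 (mul_nonneg (sub_nonneg.2 hlip)
      (add_nonneg (mul_nonneg hL (norm_nonneg (xtk - xk))) (norm_nonneg (gt - g)))),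
    sq_nonneg ‖g‖, norm_nonneg (gt - g)]
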